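/- Generalized Laplace expansion: for an n×n matrix M over a commutative ring and a fixed nonempty proper subset I of rows, det M equals the sum over all column subsets J with |J| = |I| of (−1)^{Σ_{i∈I} i + Σ_{j∈J} j} · det M[I,J] · det M[Ī, J̄], where M[I,J] is the submatrix with rows I and columns J, and Ī, J̄ are the complements. -/

import Mathlib

open Matrix Finset Equiv

namespace GLaplace

variable {n : ℕ}

/-- The equivalence `Fin k ⊕ Fin m ≃ Fin n` given by a finset `S` of card `k`
(with complement of card `m`), listing `S` in order then `Sᶜ` in order. -/
noncomputable def sumEquiv (S : Finset (Fin n)) {k m : ℕ} (hk : S.card = k) (hm : Sᶜ.card = m) :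
    Fin k ⊕ Fin m ≃ Fin n :=
  Equiv.ofBijective (Sum.elim (S.orderEmbOfFin hk) (Sᶜ.orderEmbOfFin hm)) <| by
    rw [Fintype.bijective_iff_injective_and_card]
    constructor
    · apply Function.Injective.sumElim ((S.orderEmbOfFin hk).injective)
        ((Sᶜ.orderEmbOfFin hm).injective)
      intro a b hab
      have h1 := S.orderEmbOfFin_mem hk a
      have h2 := Sᶜ.orderEmbOfFin_mem hm b
      rw [← hab] at h2
      exact (Finset.mem_compl.mp h2) h1
    · simp only [Fintype.card_sum, Fintype.card_fin]
      rw [← hk, ← hm, Finset.card_add_card_compl, Fintype.card_fin]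

@[simp] lemma sumEquiv_inl (S : Finset (Fin n)) {k m : ℕ} (hk : S.card = k) (hm : Sᶜ.card = m)
    (a : Fin k) : sumEquiv S hk hm (Sum.inl a) = S.orderEmbOfFin hk a := rfl

@[simp] lemma sumEquiv_inr (S : Finset (Fin n)) {k m : ℕ} (hk : S.card = k) (hm : Sᶜ.card = m)
    (a : Fin m) : sumEquiv S hk hm (Sum.inr a) = Sᶜ.orderEmbOfFin hm a := rfl

lemma sumEquiv_inl_mem (S : Finset (Fin n)) {k m : ℕ} (hk : S.card = k) (hm : Sᶜ.card = m)
    (a : Fin k) : sumEquiv S hk hm (Sum.inl a) ∈ S := S.orderEmbOfFin_mem hk a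

lemma sumEquiv_inr_not_mem (S : Finset (Fin n)) {k m : ℕ} (hk : S.card = k) (hm : Sᶜ.card = m)
    (a : Fin m) : sumEquiv S hk hm (Sum.inr a) ∉ S :=
  Finset.mem_compl.mp (Sᶜ.orderEmbOfFin_mem hm a)

/-- Generic helper: a bijection `g` which maps `T'` into `T` strictly monotonically
intertwines the order embeddings. -/
lemma orderEmb_comp_eq {T T' : Finset (Fin n)} {r : ℕ} (hT : T.card = r) (hT' : T'.card = r)
    (g : Fin n ≃ Fin n) (hmem : ∀ v ∈ T', g v ∈ T)
    (hmono : ∀ u ∈ T', ∀ v ∈ T', u < v → g u < g v) (i : Fin r) :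
    T.orderEmbOfFin hT i = g (T'.orderEmbOfFin hT' i) := by
  have := Finset.orderEmbOfFin_unique hT (f := fun i => g (T'.orderEmbOfFin hT' i))
    (fun x => hmem _ (T'.orderEmbOfFin_mem hT' x))
    (fun x y hxy => hmono _ (T'.orderEmbOfFin_mem hT' x) _ (T'.orderEmbOfFin_mem hT' y)
      ((T'.orderEmbOfFin hT').strictMono hxy))
  exact (congrFun this i).symm


lemma sumEquiv_swap {S : Finset (Fin n)} {k m : ℕ} (hk : S.card = k) (hm : Sᶜ.card = m)
    {a b : Fin n} (hab : (b : ℕ) = (a : ℕ) + 1) (ha : a ∉ S) (hb : b ∈ S)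
    (hk' : (insert a (S.erase b)).card = k) (hm' : (insert a (S.erase b))ᶜ.card = m) :
    sumEquiv S hk hm = (sumEquiv (insert a (S.erase b)) hk' hm').trans (Equiv.swap a b) := by
  have hne : a ≠ b := by intro h; rw [h] at hab; omega
  set S' := insert a (S.erase b) with hS'
  have hmemS' : ∀ v ∈ S', v = a ∨ (v ∈ S ∧ v ≠ b) := by
    intro v hv
    rcases Finset.mem_insert.mp hv with h | h
    · exact Or.inl h
    · exact Or.inr ⟨Finset.mem_of_mem_erase h, Finset.ne_of_mem_erase h⟩
  have hmemS'c : ∀ v ∈ S'ᶜ, v ≠ a ∧ (v ∉ S ∨ v = b) := by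
    intro v hv
    rw [Finset.mem_compl, hS', Finset.mem_insert, Finset.mem_erase] at hv
    push_neg at hv
    refine ⟨hv.1, ?_⟩
    by_cases h : v ∈ S
    · exact Or.inr (by by_contra hvb; exact (hv.2 hvb) h)
    · exact Or.inl h
  apply Equiv.ext
  rintro (i | j)
  · simp only [sumEquiv_inl, Equiv.trans_apply]
    apply orderEmb_comp_eq hk hk' (Equiv.swap a b)
    · intro v hv
      rcases hmemS' v hv with rfl | ⟨hvS, hvb⟩
      · rw [Equiv.swap_apply_left]; exact hb
      · rw [Equiv.swap_apply_of_ne_of_ne (fun h => ha (by rw [← h]; exact hvS)) hvb]; exact hvS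
    · intro u hu v hv huv
      rcases hmemS' u hu with rfl | ⟨huS, hub⟩
      · rw [Equiv.swap_apply_left]
        have hva : v ≠ u := (ne_of_gt huv)
        rcases hmemS' v hv with rfl | ⟨hvS, hvb⟩
        · exact absurd rfl hva
        · rw [Equiv.swap_apply_of_ne_of_ne (fun h => ha (by rw [← h]; exact hvS)) hvb]
          have h1 : (u : ℕ) < (v : ℕ) := huv
          have h2 : (v : ℕ) ≠ (b : ℕ) := fun h => hvb (Fin.ext h)
          exact Fin.lt_def.mpr (by omega)
      · have hua : u ≠ a := fun h => ha (by rw [← h]; exact huS)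
        rw [Equiv.swap_apply_of_ne_of_ne hua hub]
        rcases hmemS' v hv with rfl | ⟨hvS, hvb⟩
        · rw [Equiv.swap_apply_left]
          have h1 : (u : ℕ) < (v : ℕ) := huv
          exact Fin.lt_def.mpr (by omega)
        · rw [Equiv.swap_apply_of_ne_of_ne (fun h => ha (by rw [← h]; exact hvS)) hvb]; exact huv
  · simp only [sumEquiv_inr, Equiv.trans_apply]
    apply orderEmb_comp_eq hm hm' (Equiv.swap a b)
    · intro v hv
      obtain ⟨hva, h⟩ := hmemS'c v hv
      rcases h with h | rfl
      · rw [Equiv.swap_apply_of_ne_of_ne hva (fun hvb => h (hvb ▸ hb))]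
        exact Finset.mem_compl.mpr h
      · rw [Equiv.swap_apply_right]
        exact Finset.mem_compl.mpr ha
    · intro u hu v hv huv
      obtain ⟨hua, hus⟩ := hmemS'c u hu
      obtain ⟨hva, hvs⟩ := hmemS'c v hv
      by_cases hub : u = b
      · subst hub
        have hvb : v ≠ u := ne_of_gt huv
        rw [Equiv.swap_apply_right, Equiv.swap_apply_of_ne_of_ne hva hvb]
        have h1 : (u : ℕ) < (v : ℕ) := huv
        exact Fin.lt_def.mpr (by omega)
      · rw [Equiv.swap_apply_of_ne_of_ne hua hub]
        by_cases hvb : v = b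
        · subst hvb
          rw [Equiv.swap_apply_right]
          have h1 : (u : ℕ) < (v : ℕ) := huv
          have h2 : (u : ℕ) ≠ (a : ℕ) := fun h => hua (Fin.ext h)
          exact Fin.lt_def.mpr (by omega)
        · rw [Equiv.swap_apply_of_ne_of_ne hva hvb]; exact huv

/-- The reference set `{0, ..., k-1}` in `Fin n`. -/
noncomputable def base (k : ℕ) (hkn : k ≤ n) : Finset (Fin n) :=
  Finset.map (Fin.castLEEmb hkn) Finset.univ

@[simp] lemma card_base (k : ℕ) (hkn : k ≤ n) : (base k hkn).card = k := by
  simp [base]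

lemma mem_base {k : ℕ} {hkn : k ≤ n} {x : Fin n} : x ∈ base k hkn ↔ (x : ℕ) < k := by
  simp only [base, Finset.mem_map, Finset.mem_univ, true_and]
  constructor
  · rintro ⟨y, rfl⟩; exact y.isLt
  · intro h; exact ⟨⟨x, h⟩, rfl⟩

lemma sign_sumEquiv_aux {k m : ℕ} (hkn : k ≤ n) (hmB : (base k hkn)ᶜ.card = m) (N : ℕ) :
    ∀ (S : Finset (Fin n)) (hk : S.card = k) (hm : Sᶜ.card = m),
      (∑ x ∈ S, (x : ℕ)) = N →
      Equiv.Perm.sign ((sumEquiv (base k hkn) (card_base k hkn) hmB).symm.trans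
          (sumEquiv S hk hm)) =
        (-1) ^ (∑ x ∈ S, (x : ℕ) + ∑ x ∈ base k hkn, (x : ℕ)) := by
  induction N using Nat.strong_induction_on with
  | _ N IH =>
  intro S hk hm hsum
  by_cases hex : ∃ a b : Fin n, (b : ℕ) = (a : ℕ) + 1 ∧ a ∉ S ∧ b ∈ S
  · obtain ⟨a, b, hab, ha, hb⟩ := hex
    have hne : a ≠ b := by intro h; rw [h] at hab; omega
    have hk' : (insert a (S.erase b)).card = k := by
      rw [Finset.card_insert_of_notMem (fun h => ha (Finset.mem_of_mem_erase h)),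
        Finset.card_erase_of_mem hb, ← hk]
      have : 1 ≤ S.card := Finset.card_pos.mpr ⟨b, hb⟩
      omega
    have hm' : (insert a (S.erase b))ᶜ.card = m := by
      rw [Finset.card_compl, hk', Fintype.card_fin]
      rw [Finset.card_compl, hk, Fintype.card_fin] at hm
      exact hm
    have hsum' : (∑ x ∈ insert a (S.erase b), (x : ℕ)) + 1 = N := by
      rw [Finset.sum_insert (fun h => ha (Finset.mem_of_mem_erase h))]
      have h3 : (b : ℕ) + ∑ x ∈ S.erase b, (x : ℕ) = ∑ x ∈ S, (x : ℕ) :=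
        Finset.add_sum_erase S (fun x : Fin n => (x : ℕ)) hb
      omega
    have key := sumEquiv_swap hk hm hab ha hb hk' hm'
    rw [key, ← Equiv.trans_assoc]
    have : ((sumEquiv (base k hkn) (card_base k hkn) hmB).symm.trans
        (sumEquiv (insert a (S.erase b)) hk' hm')).trans (Equiv.swap a b) =
        Equiv.swap a b * ((sumEquiv (base k hkn) (card_base k hkn) hmB).symm.trans
        (sumEquiv (insert a (S.erase b)) hk' hm')) := rfl
    rw [this, _root_.map_mul, Equiv.Perm.sign_swap hne,
      IH (N - 1) (by omega) _ hk' hm' (by omega)]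
    have h2 : (∑ x ∈ S, (x : ℕ)) + ∑ x ∈ base k hkn, (x : ℕ) =
        ((∑ x ∈ insert a (S.erase b), (x : ℕ)) + ∑ x ∈ base k hkn, (x : ℕ)) + 1 := by omega
    rw [h2, pow_succ]
    exact mul_comm _ _
  · -- no descent possible: S = base k hkn
    push_neg at hex
    have hdown : ∀ d : ℕ, ∀ x ∈ S, ∀ y : Fin n, (y : ℕ) + d = (x : ℕ) → y ∈ S := by
      intro d
      induction d with
      | zero =>
        intro x hx y hy
        have : y = x := Fin.ext (by omega)
        exact this ▸ hx
      | succ d IHd =>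
        intro x hx y hy
        have hyn : (y : ℕ) + 1 < n := by have := x.isLt; omega
        have hb' : (⟨(y : ℕ) + 1, hyn⟩ : Fin n) ∈ S := IHd x hx _ (by simp; omega)
        by_contra hy'
        exact (hex y ⟨(y : ℕ) + 1, hyn⟩ rfl hy') hb'
    have hsub : S ⊆ base k hkn := by
      intro x hx
      rw [mem_base]
      by_contra hxk
      push_neg at hxk
      have hx1n : (x : ℕ) + 1 ≤ n := x.isLt
      have hsub2 : base ((x : ℕ) + 1) hx1n ⊆ S := by
        intro y hy
        rw [mem_base] at hy
        exact hdown ((x : ℕ) - (y : ℕ)) x hx y (by omega)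
      have := Finset.card_le_card hsub2
      rw [card_base, hk] at this
      omega
    have hSeq : S = base k hkn :=
      Finset.eq_of_subset_of_card_le hsub (by rw [card_base, hk])
    subst hSeq
    rw [Equiv.symm_trans_self]
    have heven : Even ((∑ x ∈ base k hkn, (x : ℕ)) + ∑ x ∈ base k hkn, (x : ℕ)) := ⟨_, rfl⟩
    rw [heven.neg_one_pow]
    simp


lemma sign_sumEquiv {k m : ℕ} (S T : Finset (Fin n)) (hkS : S.card = k) (hmS : Sᶜ.card = m)
    (hkT : T.card = k) (hmT : Tᶜ.card = m) :
    Equiv.Perm.sign ((sumEquiv T hkT hmT).symm.trans (sumEquiv S hkS hmS)) =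
      (-1) ^ (∑ x ∈ S, (x : ℕ) + ∑ x ∈ T, (x : ℕ)) := by
  have hkn : k ≤ n := by
    rw [← hkS]
    simpa using Finset.card_le_univ S
  have hmB : (base k hkn)ᶜ.card = m := by
    rw [Finset.card_compl, card_base, Fintype.card_fin]
    rw [Finset.card_compl, hkS, Fintype.card_fin] at hmS
    exact hmS
  set E0 := sumEquiv (base k hkn) (card_base k hkn) hmB with hE0
  have h1 := sign_sumEquiv_aux hkn hmB _ S hkS hmS rfl
  have h2 := sign_sumEquiv_aux hkn hmB _ T hkT hmT rfl
  have hdec : (sumEquiv T hkT hmT).symm.trans (sumEquiv S hkS hmS) =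
      ((sumEquiv T hkT hmT).symm.trans E0).trans (E0.symm.trans (sumEquiv S hkS hmS)) := by
    rw [Equiv.trans_assoc, ← Equiv.trans_assoc E0 E0.symm, Equiv.self_trans_symm,
      Equiv.refl_trans]
  have hmul : ((sumEquiv T hkT hmT).symm.trans E0).trans (E0.symm.trans (sumEquiv S hkS hmS)) =
      (E0.symm.trans (sumEquiv S hkS hmS)) * ((sumEquiv T hkT hmT).symm.trans E0) := rfl
  have hinv : ((sumEquiv T hkT hmT).symm.trans E0) = (E0.symm.trans (sumEquiv T hkT hmT))⁻¹ := by
    rfl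
  rw [hdec, hmul, _root_.map_mul, hinv, map_inv, h1, h2]
  rw [Int.units_inv_eq_self, ← pow_add]
  have harith : (∑ x ∈ S, (x : ℕ) + ∑ x ∈ base k hkn, (x : ℕ)) +
      (∑ x ∈ T, (x : ℕ) + ∑ x ∈ base k hkn, (x : ℕ)) =
      (∑ x ∈ S, (x : ℕ) + ∑ x ∈ T, (x : ℕ)) + 2 * ∑ x ∈ base k hkn, (x : ℕ) := by ring
  rw [harith, pow_add, pow_mul, neg_one_sq, one_pow, mul_one]

section Phi

variable {k m : ℕ} (I J : Finset (Fin n)) (hkI : I.card = k) (hmI : Iᶜ.card = m)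
  (hkJ : J.card = k) (hmJ : Jᶜ.card = m)

/-- Assemble a permutation of `Fin n` mapping `J` onto `I` (in given orders). -/
noncomputable def phi (τ₁ : Equiv.Perm (Fin k)) (τ₂ : Equiv.Perm (Fin m)) : Equiv.Perm (Fin n) :=
  (sumEquiv J hkJ hmJ).symm.trans ((Equiv.sumCongr τ₁ τ₂).trans (sumEquiv I hkI hmI))

lemma phi_apply_inl (τ₁ : Equiv.Perm (Fin k)) (τ₂ : Equiv.Perm (Fin m)) (b : Fin k) :
    phi I J hkI hmI hkJ hmJ τ₁ τ₂ (J.orderEmbOfFin hkJ b) = I.orderEmbOfFin hkI (τ₁ b) := by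
  have h0 : (sumEquiv J hkJ hmJ).symm (J.orderEmbOfFin hkJ b) = Sum.inl b :=
    (sumEquiv J hkJ hmJ).symm_apply_apply (Sum.inl b)
  simp [phi, h0]

lemma phi_apply_inr (τ₁ : Equiv.Perm (Fin k)) (τ₂ : Equiv.Perm (Fin m)) (c : Fin m) :
    phi I J hkI hmI hkJ hmJ τ₁ τ₂ (Jᶜ.orderEmbOfFin hmJ c) = Iᶜ.orderEmbOfFin hmI (τ₂ c) := by
  have h0 : (sumEquiv J hkJ hmJ).symm (Jᶜ.orderEmbOfFin hmJ c) = Sum.inr c :=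
    (sumEquiv J hkJ hmJ).symm_apply_apply (Sum.inr c)
  simp [phi, h0]

lemma phi_mem_iff (τ₁ : Equiv.Perm (Fin k)) (τ₂ : Equiv.Perm (Fin m)) (x : Fin n) :
    phi I J hkI hmI hkJ hmJ τ₁ τ₂ x ∈ I ↔ x ∈ J := by
  obtain ⟨y, rfl⟩ := (sumEquiv J hkJ hmJ).surjective x
  cases y with
  | inl b =>
    simp only [phi, Equiv.trans_apply, Equiv.symm_apply_apply, Equiv.sumCongr_apply,
      Sum.map_inl]
    exact iff_of_true (sumEquiv_inl_mem I hkI hmI _) (sumEquiv_inl_mem J hkJ hmJ b)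
  | inr c =>
    simp only [phi, Equiv.trans_apply, Equiv.symm_apply_apply, Equiv.sumCongr_apply,
      Sum.map_inr]
    exact iff_of_false (sumEquiv_inr_not_mem I hkI hmI _) (sumEquiv_inr_not_mem J hkJ hmJ c)

lemma phi_image (τ₁ : Equiv.Perm (Fin k)) (τ₂ : Equiv.Perm (Fin m)) :
    I.image ⇑(phi I J hkI hmI hkJ hmJ τ₁ τ₂).symm = J := by
  ext j
  rw [Finset.mem_image]
  constructor
  · rintro ⟨i, hi, rfl⟩
    rw [← phi_mem_iff I J hkI hmI hkJ hmJ τ₁ τ₂, Equiv.apply_symm_apply]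
    exact hi
  · intro hj
    exact ⟨_, (phi_mem_iff I J hkI hmI hkJ hmJ τ₁ τ₂ j).mpr hj,
      Equiv.symm_apply_apply _ _⟩

lemma phi_sign (τ₁ : Equiv.Perm (Fin k)) (τ₂ : Equiv.Perm (Fin m)) :
    Equiv.Perm.sign (phi I J hkI hmI hkJ hmJ τ₁ τ₂) =
      Equiv.Perm.sign τ₁ * Equiv.Perm.sign τ₂ *
        (-1) ^ (∑ i ∈ I, (i : ℕ) + ∑ j ∈ J, (j : ℕ)) := by
  have hdec : phi I J hkI hmI hkJ hmJ τ₁ τ₂ =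
      ((sumEquiv J hkJ hmJ).permCongr (Equiv.sumCongr τ₁ τ₂)).trans
        ((sumEquiv J hkJ hmJ).symm.trans (sumEquiv I hkI hmI)) := by
    apply Equiv.ext
    intro x
    simp [phi, Equiv.permCongr_apply]
  have hmul : ((sumEquiv J hkJ hmJ).permCongr (Equiv.sumCongr τ₁ τ₂)).trans
      ((sumEquiv J hkJ hmJ).symm.trans (sumEquiv I hkI hmI)) =
      ((sumEquiv J hkJ hmJ).symm.trans (sumEquiv I hkI hmI)) *
        ((sumEquiv J hkJ hmJ).permCongr (Equiv.sumCongr τ₁ τ₂)) := rfl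
  rw [hdec, hmul, _root_.map_mul, Equiv.Perm.sign_permCongr, Equiv.Perm.sign_sumCongr,
    sign_sumEquiv I J hkI hmI hkJ hmJ]
  exact mul_comm _ _

lemma phi_injective : Function.Injective2 (phi I J hkI hmI hkJ hmJ) := by
  intro τ₁ τ₁' τ₂ τ₂' h
  have key : ∀ y, Equiv.sumCongr τ₁ τ₂ y = Equiv.sumCongr τ₁' τ₂' y := by
    intro y
    have := congrArg (fun (e : Equiv.Perm (Fin n)) =>
      (sumEquiv I hkI hmI).symm (e (sumEquiv J hkJ hmJ y))) h
    simpa [phi] using this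
  constructor
  · apply Equiv.ext; intro b
    have := key (Sum.inl b)
    simpa using this
  · apply Equiv.ext; intro c
    have := key (Sum.inr c)
    simpa using this

lemma phi_surjective (σ : Equiv.Perm (Fin n)) (hσ : I.image ⇑σ.symm = J) :
    ∃ τ₁ τ₂, phi I J hkI hmI hkJ hmJ τ₁ τ₂ = σ := by
  have hiff : ∀ x : Fin n, x ∈ J ↔ σ x ∈ I := by
    intro x
    constructor
    · intro hx
      rw [← hσ] at hx
      obtain ⟨i, hi, hix⟩ := Finset.mem_image.mp hx
      rw [← hix, Equiv.apply_symm_apply]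
      exact hi
    · intro hx
      rw [← hσ]
      exact Finset.mem_image.mpr ⟨σ x, hx, σ.symm_apply_apply x⟩
  have hiffc : ∀ x : Fin n, x ∈ Jᶜ ↔ σ x ∈ Iᶜ := by
    intro x
    simp only [Finset.mem_compl]
    exact not_iff_not.mpr (hiff x)
  refine ⟨(J.orderIsoOfFin hkJ).toEquiv.trans ((σ.subtypeEquiv hiff).trans
      (I.orderIsoOfFin hkI).toEquiv.symm),
    (Jᶜ.orderIsoOfFin hmJ).toEquiv.trans ((σ.subtypeEquiv hiffc).trans
      (Iᶜ.orderIsoOfFin hmI).toEquiv.symm), ?_⟩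
  apply Equiv.ext
  intro x
  obtain ⟨y, rfl⟩ := (sumEquiv J hkJ hmJ).surjective x
  cases y with
  | inl b =>
    have h1 := phi_apply_inl I J hkI hmI hkJ hmJ
      ((J.orderIsoOfFin hkJ).toEquiv.trans ((σ.subtypeEquiv hiff).trans
        (I.orderIsoOfFin hkI).toEquiv.symm))
      ((Jᶜ.orderIsoOfFin hmJ).toEquiv.trans ((σ.subtypeEquiv hiffc).trans
        (Iᶜ.orderIsoOfFin hmI).toEquiv.symm)) b
    rw [sumEquiv_inl, h1]
    rw [← Finset.coe_orderIsoOfFin_apply I hkI, ← Finset.coe_orderIsoOfFin_apply J hkJ]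
    simp [Equiv.subtypeEquiv]
  | inr c =>
    have h1 := phi_apply_inr I J hkI hmI hkJ hmJ
      ((J.orderIsoOfFin hkJ).toEquiv.trans ((σ.subtypeEquiv hiff).trans
        (I.orderIsoOfFin hkI).toEquiv.symm))
      ((Jᶜ.orderIsoOfFin hmJ).toEquiv.trans ((σ.subtypeEquiv hiffc).trans
        (Iᶜ.orderIsoOfFin hmI).toEquiv.symm)) c
    rw [sumEquiv_inr, h1]
    rw [← Finset.coe_orderIsoOfFin_apply Iᶜ hmI, ← Finset.coe_orderIsoOfFin_apply Jᶜ hmJ]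
    simp [Equiv.subtypeEquiv]

lemma phi_prod {R : Type*} [CommRing R] (M : Matrix (Fin n) (Fin n) R)
    (τ₁ : Equiv.Perm (Fin k)) (τ₂ : Equiv.Perm (Fin m)) :
    ∏ i, M (phi I J hkI hmI hkJ hmJ τ₁ τ₂ i) i =
      (∏ b, M (I.orderEmbOfFin hkI (τ₁ b)) (J.orderEmbOfFin hkJ b)) *
      ∏ c, M (Iᶜ.orderEmbOfFin hmI (τ₂ c)) (Jᶜ.orderEmbOfFin hmJ c) := by
  rw [← Equiv.prod_comp (sumEquiv J hkJ hmJ)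
    (fun i => M (phi I J hkI hmI hkJ hmJ τ₁ τ₂ i) i), Fintype.prod_sum_type]
  congr 1
  · refine Finset.prod_congr rfl fun b _ => ?_
    rw [sumEquiv_inl, phi_apply_inl]
  · refine Finset.prod_congr rfl fun c _ => ?_
    rw [sumEquiv_inr, phi_apply_inr]

lemma fiber_sum {R : Type*} [CommRing R] (M : Matrix (Fin n) (Fin n) R) :
    ∑ σ ∈ Finset.univ.filter (fun σ : Equiv.Perm (Fin n) => I.image ⇑σ.symm = J),
      ((Equiv.Perm.sign σ : ℤ) : R) * ∏ i, M (σ i) i =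
    (-1 : R) ^ (∑ i ∈ I, (i : ℕ) + ∑ j ∈ J, (j : ℕ)) *
      (M.submatrix (fun a : Fin k => I.orderEmbOfFin hkI a)
        (fun b : Fin k => J.orderEmbOfFin hkJ b)).det *
      (M.submatrix (fun a : Fin m => Iᶜ.orderEmbOfFin hmI a)
        (fun b : Fin m => Jᶜ.orderEmbOfFin hmJ b)).det := by
  have expand : (∑ p : Equiv.Perm (Fin k) × Equiv.Perm (Fin m),
        ((-1 : R) ^ (∑ i ∈ I, (i : ℕ) + ∑ j ∈ J, (j : ℕ)) *
          (((Equiv.Perm.sign p.1 : ℤ) : R) *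
            ∏ b, M (I.orderEmbOfFin hkI (p.1 b)) (J.orderEmbOfFin hkJ b))) *
        (((Equiv.Perm.sign p.2 : ℤ) : R) *
          ∏ c, M (Iᶜ.orderEmbOfFin hmI (p.2 c)) (Jᶜ.orderEmbOfFin hmJ c))) =
      (-1 : R) ^ (∑ i ∈ I, (i : ℕ) + ∑ j ∈ J, (j : ℕ)) *
      (M.submatrix (fun a : Fin k => I.orderEmbOfFin hkI a)
        (fun b : Fin k => J.orderEmbOfFin hkJ b)).det *
      (M.submatrix (fun a : Fin m => Iᶜ.orderEmbOfFin hmI a)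
        (fun b : Fin m => Jᶜ.orderEmbOfFin hmJ b)).det := by
    rw [Fintype.sum_prod_type]
    simp_rw [← Finset.mul_sum]
    rw [← Finset.sum_mul, ← Finset.mul_sum, Matrix.det_apply', Matrix.det_apply']
    rfl
  rw [← expand]
  refine (Finset.sum_bij (fun p _ => phi I J hkI hmI hkJ hmJ p.1 p.2) ?_ ?_ ?_ ?_).symm
  · intro p _
    rw [Finset.mem_filter]
    exact ⟨Finset.mem_univ _, phi_image I J hkI hmI hkJ hmJ p.1 p.2⟩
  · intro p _ q _ h
    obtain ⟨h1, h2⟩ := phi_injective I J hkI hmI hkJ hmJ h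
    exact Prod.ext h1 h2
  · intro σ hσ
    rw [Finset.mem_filter] at hσ
    obtain ⟨τ₁, τ₂, hphi⟩ := phi_surjective I J hkI hmI hkJ hmJ σ hσ.2
    exact ⟨(τ₁, τ₂), Finset.mem_univ _, hphi⟩
  · intro p _
    rw [phi_prod I J hkI hmI hkJ hmJ M p.1 p.2]
    have hs := phi_sign I J hkI hmI hkJ hmJ p.1 p.2
    have hsR : ((Equiv.Perm.sign (phi I J hkI hmI hkJ hmJ p.1 p.2) : ℤ) : R) =
        ((Equiv.Perm.sign p.1 : ℤ) : R) * ((Equiv.Perm.sign p.2 : ℤ) : R) *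
          (-1 : R) ^ (∑ i ∈ I, (i : ℕ) + ∑ j ∈ J, (j : ℕ)) := by
      rw [hs]
      push_cast
      ring
    rw [hsR]
    ring

end Phi

end GLaplace

/-- Generalized Laplace expansion: for an `n × n` matrix `M` over a commutative
ring and a fixed nonempty proper subset `I` of rows, `det M` is the sum over all
column subsets `J` with `|J| = |I|` of
`(-1)^(Σ_{i∈I} i + Σ_{j∈J} j) ⬝ det M[I,J] ⬝ det M[Iᶜ,Jᶜ]`. -/
theorem generalized_laplace_expansion {R : Type*} [CommRing R] {n : ℕ}
    (M : Matrix (Fin n) (Fin n) R) (I : Finset (Fin n))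
    (hne : I.Nonempty) (hproper : I ≠ Finset.univ) :
    M.det = ∑ J ∈ (Finset.univ : Finset (Fin n)).powersetCard I.card,
      if h : J.card = I.card then
        (-1 : R) ^ (∑ i ∈ I, (i : ℕ) + ∑ j ∈ J, (j : ℕ)) *
          (M.submatrix (fun a : Fin I.card => I.orderEmbOfFin rfl a)
            (fun b : Fin I.card => J.orderEmbOfFin h b)).det *
          (M.submatrix (fun a : Fin Iᶜ.card => Iᶜ.orderEmbOfFin rfl a)
            (fun b : Fin Iᶜ.card => Jᶜ.orderEmbOfFin
              (by simp [Finset.card_compl, h]) b)).det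
      else 0 := by
  classical
  rw [Matrix.det_apply']
  rw [← Finset.sum_fiberwise_of_maps_to
    (g := fun σ : Equiv.Perm (Fin n) => I.image ⇑σ.symm)
    (t := (Finset.univ : Finset (Fin n)).powersetCard I.card)
    (fun σ _ => Finset.mem_powersetCard_univ.mpr
      (Finset.card_image_of_injective I σ.symm.injective))
    (fun σ => (((Equiv.Perm.sign σ : ℤ) : R)) * ∏ i, M (σ i) i)]
  refine Finset.sum_congr rfl fun J hJ => ?_
  have hkJ : J.card = I.card := Finset.mem_powersetCard_univ.mp hJ
  rw [dif_pos hkJ]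
  exact GLaplace.fiber_sum I J rfl rfl hkJ (by simp [Finset.card_compl, hkJ]) M
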